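/- For every real y ≥ 0, one has erf(y) ≥ y/√(y² + 4/π). -/

import Mathlib

open Real

/-- erf(x) = (2/√π)·∫_0^x e^{−t²} dt -/
noncomputable def erf (x : ℝ) : ℝ := (2 / Real.sqrt Real.pi) * ∫ t in (0:ℝ)..x, Real.exp (-t ^ 2)

namespace ErfAux

open Set MeasureTheory

noncomputable def c : ℝ := 4 / Real.pi

lemma hc : 0 < c := by unfold c; positivity

lemma hc_lb : 1.27 < c := by
  unfold c
  rw [lt_div_iff₀ Real.pi_pos]
  nlinarith [Real.pi_lt_d6]

lemma hc_ub : c < 1.28 := by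
  unfold c
  rw [div_lt_iff₀ Real.pi_pos]
  nlinarith [Real.pi_gt_d6]

lemma sqrt_c_eq : Real.sqrt c = 2 / Real.sqrt Real.pi := by
  rw [show c = (2 / Real.sqrt Real.pi)^2 by
    unfold c; rw [div_pow, Real.sq_sqrt Real.pi_pos.le]; norm_num]
  exact Real.sqrt_sq (by positivity)

lemma spos (t : ℝ) : 0 < Real.sqrt (t^2 + c) :=
  Real.sqrt_pos.2 (add_pos_of_nonneg_of_pos (sq_nonneg t) hc)

lemma s_sq (t : ℝ) : (Real.sqrt (t^2 + c))^2 = t^2 + c :=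
  Real.sq_sqrt (add_pos_of_nonneg_of_pos (sq_nonneg t) hc).le

lemma hasDerivAt_s (t : ℝ) :
    HasDerivAt (fun u => Real.sqrt (u^2 + c)) (t / Real.sqrt (t^2 + c)) t := by
  have h1 : HasDerivAt (fun u : ℝ => u^2 + c) (2*t) t := by
    simpa using (hasDerivAt_pow 2 t).add_const c
  have h2 := (Real.hasDerivAt_sqrt
    (add_pos_of_nonneg_of_pos (sq_nonneg t) hc).ne').comp t h1
  refine h2.congr_deriv ?_
  have hs := spos t
  field_simp

lemma hasDerivAt_G (t : ℝ) :
    HasDerivAt (fun u => u / Real.sqrt (u^2 + c)) (c / (Real.sqrt (t^2 + c))^3) t := by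
  have hs := spos t
  have h := (hasDerivAt_id t).div (hasDerivAt_s t) hs.ne'
  refine h.congr_deriv ?_
  have h2 := s_sq t
  field_simp
  simp only [id_eq]
  linear_combination h2

noncomputable def phi (u : ℝ) : ℝ := Real.exp (-u^2) * (Real.sqrt (u^2 + c) - u) / c

noncomputable def D (t : ℝ) : ℝ :=
  (Real.exp (-t^2) * (-2*t) * (Real.sqrt (t^2+c) - t)
    + Real.exp (-t^2) * (t / Real.sqrt (t^2+c) - 1)) / c

lemma hasDerivAt_phi (t : ℝ) : HasDerivAt phi (D t) t := by
  have h1 : HasDerivAt (fun u : ℝ => -u^2) (-(2*t)) t := by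
    simpa using (hasDerivAt_pow 2 t).fun_neg
  have hexp : HasDerivAt (fun u : ℝ => Real.exp (-u^2)) (Real.exp (-t^2) * (-2*t)) t := by
    have := (Real.hasDerivAt_exp (-t^2)).comp t h1
    refine this.congr_deriv ?_
    ring
  have hlin : HasDerivAt (fun u : ℝ => Real.sqrt (u^2+c) - u) (t / Real.sqrt (t^2+c) - 1) t :=
    (hasDerivAt_s t).sub (hasDerivAt_id t)
  exact (hexp.mul hlin).div_const c

lemma cont_sqrtc : Continuous fun t : ℝ => Real.sqrt (t^2 + c) :=
  Real.continuous_sqrt.comp (by continuity)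

lemma cont_D : Continuous D := by
  unfold D
  apply Continuous.div_const
  apply Continuous.add
  · exact ((Real.continuous_exp.comp (by continuity)).mul (by continuity)).mul
      (cont_sqrtc.sub continuous_id)
  · exact (Real.continuous_exp.comp (by continuity)).mul
      ((continuous_id.div cont_sqrtc fun t => (spos t).ne').sub continuous_const)

lemma key_sign {t : ℝ} (ht : 1/2 ≤ t) : Real.exp (-t^2) + D t ≤ 0 := by
  have hs0 := spos t
  have hs2 := s_sq t
  set s := Real.sqrt (t^2 + c) with hsdef
  have hE : 0 < Real.exp (-t^2) := Real.exp_pos _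
  have ht0 : 0 < t := by linarith
  have hc1 := hc_lb; have hc2 := hc_ub
  have ht2 : 1/4 ≤ t^2 := by nlinarith
  have hA : 0 < 2*t^2 + c - 1 := by nlinarith
  have hB : 0 < 2*t^2 + 2*c - 1 := by nlinarith
  have key : s * (2*t^2 + c - 1) ≤ t * (2*t^2 + 2*c - 1) := by
    have hq : (c-1)^2 ≤ t^2*(2-c) := by
      nlinarith [mul_nonneg (by linarith : (0:ℝ) ≤ t^2 - 1/4) (by linarith : (0:ℝ) ≤ 2-c)]
    have h1 : (s * (2*t^2 + c - 1))^2 ≤ (t * (2*t^2 + 2*c - 1))^2 := by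
      have e : (s*(2*t^2+c-1))^2 = (t^2+c)*(2*t^2+c-1)^2 := by rw [mul_pow, hs2]
      rw [e]
      nlinarith [mul_nonneg (by linarith : (0:ℝ) ≤ t^2*(2-c) - (c-1)^2)
        (by linarith : (0:ℝ) ≤ c)]
    nlinarith [h1, mul_pos hs0 hA, mul_pos ht0 hB]
  have hexpand : Real.exp (-t^2) + D t
      = Real.exp (-t^2) / (c * s) * (s * (2*t^2 + c - 1) - t * (2*t^2 + 2*c - 1)) := by
    unfold D
    rw [← hsdef]
    field_simp
    linear_combination (-2*t) * hs2
  rw [hexpand]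
  apply mul_nonpos_of_nonneg_of_nonpos
  · positivity
  · linarith

lemma small_pointwise {t : ℝ} (h0 : 0 ≤ t) (h1 : t ≤ 1/2) :
    c / (Real.sqrt (t^2+c))^3 ≤ Real.sqrt c * Real.exp (-t^2) := by
  have hs0 := spos t
  have hs2 := s_sq t
  set s := Real.sqrt (t^2 + c) with hsdef
  have hc1 := hc_lb; have hc2 := hc_ub
  have hE : 0 < Real.exp (-t^2) := Real.exp_pos _
  have hB : 1 - 2*t^2 ≤ Real.exp (-t^2)^2 := by
    have h := Real.add_one_le_exp (-(2*t^2))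
    have h2 : Real.exp (-t^2)^2 = Real.exp (-(2*t^2)) := by
      rw [sq, ← Real.exp_add]; ring_nf
    linarith [h2 ▸ h]
  have hA : c ≤ (1 - 2*t^2) * (t^2+c)^3 := by
    have hx1 : t^2 ≤ 1/4 := by nlinarith
    have h14 : (0:ℝ) ≤ 1 - 2*t^2 := by nlinarith
    have e1 : c^3 + 3*c^2*t^2 ≤ (t^2+c)^3 := by
      nlinarith [mul_nonneg (mul_nonneg (sq_nonneg t) (sq_nonneg t)) (sq_nonneg t),
        mul_nonneg (mul_nonneg (sq_nonneg t) (sq_nonneg t)) hc.le]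
    have e3 : c ≤ (1-2*t^2)*(c^3+3*c^2*t^2) := by
      nlinarith [mul_nonneg (sq_nonneg c) (mul_nonneg (sq_nonneg t)
          (by linarith : (0:ℝ) ≤ 1/4 - t^2)),
        mul_nonneg (mul_nonneg (by linarith : (0:ℝ) ≤ 1/4 - t^2) (sq_nonneg c))
          (by linarith : (0:ℝ) ≤ 2*c - 3/2),
        mul_nonneg (mul_nonneg (by linarith : (0:ℝ) ≤ c - 1.27) (sq_nonneg c)) h0,
        mul_pos hc hc, sq_nonneg c,
        mul_nonneg (by linarith : (0:ℝ) ≤ c - 1.27) (sq_nonneg c)]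
    calc c ≤ (1-2*t^2)*(c^3+3*c^2*t^2) := e3
      _ ≤ (1 - 2*t^2) * (t^2+c)^3 := mul_le_mul_of_nonneg_left e1 h14
  have hsq : c ≤ (Real.exp (-t^2) * s^3)^2 := by
    have h6 : (s^3)^2 = (t^2+c)^3 := by
      calc (s^3)^2 = (s^2)^3 := by ring
        _ = (t^2+c)^3 := by rw [hs2]
    have h7 : (1 - 2*t^2) * (t^2+c)^3 ≤ Real.exp (-t^2)^2 * (t^2+c)^3 := by
      apply mul_le_mul_of_nonneg_right hB
      positivity
    calc c ≤ (1 - 2*t^2) * (t^2+c)^3 := hA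
      _ ≤ Real.exp (-t^2)^2 * (t^2+c)^3 := h7
      _ = (Real.exp (-t^2) * s^3)^2 := by rw [mul_pow, h6]
  have hroot : Real.sqrt c ≤ Real.exp (-t^2) * s^3 := by
    rw [show Real.exp (-t^2) * s^3 = Real.sqrt ((Real.exp (-t^2) * s^3)^2) from
      (Real.sqrt_sq (by positivity)).symm]
    exact Real.sqrt_le_sqrt hsq
  rw [div_le_iff₀ (by positivity)]
  calc c = Real.sqrt c * Real.sqrt c := (Real.mul_self_sqrt hc.le).symm
    _ ≤ Real.sqrt c * (Real.exp (-t^2) * s^3) :=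
        mul_le_mul_of_nonneg_left hroot (Real.sqrt_nonneg _)
    _ = Real.sqrt c * Real.exp (-t^2) * s^3 := by ring

lemma integrable_exp : Integrable (fun t : ℝ => Real.exp (-t^2)) := by
  have := integrable_exp_neg_mul_sq (zero_lt_one (α := ℝ))
  simpa using this

end ErfAux

open ErfAux Set MeasureTheory in
theorem stmt3 (y : ℝ) (hy : 0 ≤ y) :
    erf y ≥ y / Real.sqrt (y ^ 2 + 4 / Real.pi) := by
  have hc0 := ErfAux.hc
  have herf : erf y = Real.sqrt c * ∫ t in (0:ℝ)..y, Real.exp (-t ^ 2) := by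
    rw [erf, sqrt_c_eq]
  rw [ge_iff_le, show y ^ 2 + 4 / Real.pi = y ^ 2 + c from rfl, herf]
  have hcont_g : Continuous fun t : ℝ => c / (Real.sqrt (t^2 + c))^3 :=
    continuous_const.div ((cont_sqrtc).pow 3) fun t => (pow_pos (spos t) 3).ne'
  rcases le_or_gt y (1/2) with hsmall | hlarge
  · -- small case
    have hftc : ∫ t in (0:ℝ)..y, c / (Real.sqrt (t^2 + c))^3
        = y / Real.sqrt (y^2 + c) - 0 / Real.sqrt (0^2 + c) :=
      intervalIntegral.integral_eq_sub_of_hasDerivAt (fun t _ => hasDerivAt_G t)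
        (hcont_g.intervalIntegrable 0 y)
    have hmono : ∫ t in (0:ℝ)..y, c / (Real.sqrt (t^2 + c))^3
        ≤ ∫ t in (0:ℝ)..y, Real.sqrt c * Real.exp (-t^2) := by
      apply intervalIntegral.integral_mono_on hy (hcont_g.intervalIntegrable 0 y)
        ((continuous_const.mul (Real.continuous_exp.comp (by continuity))).intervalIntegrable 0 y)
      intro t ht
      exact small_pointwise ht.1 (le_trans ht.2 hsmall)
    have hzero : (0:ℝ) / Real.sqrt (0^2 + c) = 0 := by simp
    rw [hzero, sub_zero] at hftc
    calc y / Real.sqrt (y^2 + c) = ∫ t in (0:ℝ)..y, c / (Real.sqrt (t^2 + c))^3 := hftc.symm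
      _ ≤ ∫ t in (0:ℝ)..y, Real.sqrt c * Real.exp (-t^2) := hmono
      _ = Real.sqrt c * ∫ t in (0:ℝ)..y, Real.exp (-t^2) := by
          rw [intervalIntegral.integral_const_mul]
      _ = Real.sqrt c * ∫ t in (0:ℝ)..y, Real.exp (-t^2 : ℝ) := rfl
  · -- large case
    set s := Real.sqrt (y^2 + c) with hsdef
    have hs0 := spos y
    have hs2 := s_sq y
    have hsy : y ≤ s := by
      rw [hsdef]
      calc y = Real.sqrt (y^2) := by rw [Real.sqrt_sq hy]
        _ ≤ Real.sqrt (y^2 + c) := Real.sqrt_le_sqrt (by linarith)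
    have hfz : ∀ z, y ≤ z → ∫ t in y..z, Real.exp (-t^2) ≤ phi y := by
      intro z hz
      have hdint : IntervalIntegrable D volume y z := cont_D.intervalIntegrable _ _
      have hftc2 : ∫ t in y..z, D t = phi z - phi y :=
        intervalIntegral.integral_eq_sub_of_hasDerivAt (fun t _ => hasDerivAt_phi t) hdint
      have hmono2 : ∫ t in y..z, Real.exp (-t^2) ≤ ∫ t in y..z, -(D t) := by
        apply intervalIntegral.integral_mono_on hz integrable_exp.intervalIntegrable
          hdint.neg
        intro t ht
        have h12 : 1/2 ≤ t := le_trans hlarge.le ht.1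
        simp only [Pi.neg_apply]
        linarith [key_sign h12]
      have hphiz : 0 ≤ phi z := by
        unfold phi
        have hsz : z ≤ Real.sqrt (z^2 + c) := by
          calc z ≤ |z| := le_abs_self z
            _ = Real.sqrt (z^2) := (Real.sqrt_sq_eq_abs z).symm
            _ ≤ Real.sqrt (z^2 + c) := Real.sqrt_le_sqrt (by linarith)
        exact div_nonneg (mul_nonneg (Real.exp_pos _).le (by linarith)) hc.le
      rw [intervalIntegral.integral_neg, hftc2] at hmono2
      linarith
    have hT : ∫ t in Ioi y, Real.exp (-t^2) ≤ phi y := by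
      refine le_of_tendsto
        (intervalIntegral_tendsto_integral_Ioi y integrable_exp.integrableOn Filter.tendsto_id) ?_
      filter_upwards [Filter.eventually_ge_atTop y] with z hz using hfz z hz
    have hT0 : 0 ≤ ∫ t in Ioi y, Real.exp (-t^2) :=
      setIntegral_nonneg measurableSet_Ioi fun t _ => (Real.exp_pos _).le
    have hgauss : ∫ t in Ioi (0:ℝ), Real.exp (-t^2) = Real.sqrt Real.pi / 2 := by
      have := integral_gaussian_Ioi 1
      simpa using this
    have hsplit : (∫ t in (0:ℝ)..y, Real.exp (-t^2))
        = Real.sqrt Real.pi / 2 - ∫ t in Ioi y, Real.exp (-t^2) := by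
      have hdisj : Disjoint (Ioc 0 y) (Ioi y) := by
        rw [Set.disjoint_left]
        intro a ha hb
        exact absurd hb (not_lt.2 ha.2)
      have hu := MeasureTheory.setIntegral_union hdisj measurableSet_Ioi
        (integrable_exp.integrableOn (s := Ioc 0 y)) (integrable_exp.integrableOn (s := Ioi y))
      rw [Ioc_union_Ioi_eq_Ioi hy] at hu
      rw [intervalIntegral.integral_of_le hy]
      rw [hgauss] at hu
      linarith [hu]
    have hcpi : Real.sqrt c * (Real.sqrt Real.pi / 2) = 1 := by
      rw [show Real.sqrt c * (Real.sqrt Real.pi / 2) = Real.sqrt c * Real.sqrt Real.pi / 2 by ring,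
        ← Real.sqrt_mul hc0.le]
      rw [show c * Real.pi = 4 by unfold c; field_simp]
      rw [show (4:ℝ) = 2^2 by norm_num, Real.sqrt_sq (by norm_num)]
      norm_num
    have hexp_le : Real.exp (-y^2) ≤ Real.sqrt c / s := by
      rw [le_div_iff₀ hs0]
      have hsq2 : (Real.exp (-y^2) * s)^2 ≤ c := by
        have h := Real.add_one_le_exp (2*y^2)
        have he : Real.exp (-y^2)^2 = (Real.exp (2*y^2))⁻¹ := by
          rw [sq, ← Real.exp_add, ← Real.exp_neg]
          ring_nf
        have hepos : 0 < Real.exp (2*y^2) := Real.exp_pos _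
        rw [mul_pow, he, hs2]
        rw [inv_mul_le_iff₀ hepos]
        have hc1 := hc_lb
        nlinarith [sq_nonneg y, mul_le_mul_of_nonneg_right h hc0.le]
      have h0 : 0 ≤ Real.exp (-y^2) * s := by positivity
      exact (Real.le_sqrt h0 hc0.le).mpr hsq2
    have hchain : Real.sqrt c * (∫ t in Ioi y, Real.exp (-t^2)) ≤ 1 - y / s := by
      have hstep : Real.sqrt c * phi y ≤ 1 - y / s := by
        have hnn : 0 ≤ (s - y)/c := div_nonneg (by linarith) hc0.le
        have h1 : Real.exp (-y^2) * ((s-y)/c) ≤ (Real.sqrt c / s) * ((s-y)/c) :=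
          mul_le_mul_of_nonneg_right hexp_le hnn
        have h1' : Real.sqrt c * (Real.exp (-y^2) * ((s-y)/c))
            ≤ Real.sqrt c * ((Real.sqrt c / s) * ((s-y)/c)) :=
          mul_le_mul_of_nonneg_left h1 (Real.sqrt_nonneg _)
        have hphieq : Real.sqrt c * phi y = Real.sqrt c * (Real.exp (-y^2) * ((s-y)/c)) := by
          unfold phi; rw [← hsdef]; ring
        have h2 : Real.sqrt c * ((Real.sqrt c / s) * ((s-y)/c)) = 1 - y / s := by
          rw [show Real.sqrt c * ((Real.sqrt c / s) * ((s-y)/c))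
              = (Real.sqrt c * Real.sqrt c) * ((s-y)/(s*c)) from by ring,
            Real.mul_self_sqrt hc0.le]
          field_simp
          rw [sub_div, div_self (show s ≠ 0 from hs0.ne')]
        rw [hphieq]
        linarith
      calc Real.sqrt c * (∫ t in Ioi y, Real.exp (-t^2))
          ≤ Real.sqrt c * phi y := mul_le_mul_of_nonneg_left hT (Real.sqrt_nonneg _)
        _ ≤ 1 - y / s := hstep
    have hfinal : Real.sqrt c * ∫ t in (0:ℝ)..y, Real.exp (-t^2)
        = 1 - Real.sqrt c * ∫ t in Ioi y, Real.exp (-t^2) := by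
      rw [hsplit, mul_sub, hcpi]
    calc y / s ≤ 1 - Real.sqrt c * ∫ t in Ioi y, Real.exp (-t^2) := by linarith
      _ = Real.sqrt c * ∫ t in (0:ℝ)..y, Real.exp (-t^2) := hfinal.symm
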